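/- Fix λ, k, h > 0 and integers M ≥ 1, and let aⱼ = u⁺ⁿ۪ʲ, bⱼ = u⁻ⁿ۪ʲ, fⱼ (j = 0,…,M+1) be real grid values at time level n satisfying the no-flux conditions a₀ = b₀ and a_{M+1} = b_{M+1}, and f₀ = f_{M+1} = 0. Define the time-(n+1) values by: u⁻ⁿ⁺¹۪ʲ = (1−λk/h−k/4)bⱼ + (kλ/h−k/4)b_{j+1} + (k/4)(aⱼ + a_{j+1}) − (k/(4λ))(f_{j+1} + fⱼ) for j = 0,…,M; u⁺ⁿ⁺¹۪ʲ = (1−λk/h−k/4)aⱼ + (kλ/h−k/4)a_{j−1} + (k/4)(bⱼ + b_{j−1}) + (k/(4λ))(f_{j−1} + fⱼ) for j = 1,…,M+1; and the boundary closures u⁺ⁿ⁺¹۪⁰ := u⁻ⁿ⁺¹۪⁰ and u⁻ⁿ⁺¹۪^{M+1} := u⁺ⁿ⁺¹۪^{M+1}. Then the trapezoidal discrete mass Iⁿ = h( (a₀+b₀)/2 + ∑_{j=1}^{M}(aⱼ+bⱼ) + (a_{M+1}+b_{M+1})/2 ) is exactly conserved: Iⁿ⁺¹ = Iⁿ. 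-/
import Mathlib

open Finset in
lemma aho_shift_up (g : ℕ → ℝ) : ∀ M : ℕ, 1 ≤ M →
    ∑ j ∈ Finset.Icc 1 M, g (j + 1) = ∑ j ∈ Finset.Icc 1 M, g j - g 1 + g (M + 1) := by
  intro M
  induction M with
  | zero => omega
  | succ n ih =>
    intro _
    rcases Nat.eq_or_lt_of_le (Nat.one_le_iff_ne_zero.mpr (by omega) : 1 ≤ n + 1) with h1 | h1
    · simp [← h1]
    · have hn : 1 ≤ n := by omega
      rw [Finset.sum_Icc_succ_top (by omega : 1 ≤ n + 1),
          Finset.sum_Icc_succ_top (by omega : 1 ≤ n + 1), ih hn]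
      ring

open Finset in
lemma aho_shift_down (g : ℕ → ℝ) : ∀ M : ℕ, 1 ≤ M →
    ∑ j ∈ Finset.Icc 1 M, g (j - 1) = ∑ j ∈ Finset.Icc 1 M, g j + g 0 - g M := by
  intro M
  induction M with
  | zero => omega
  | succ n ih =>
    intro _
    rcases Nat.eq_or_lt_of_le (Nat.one_le_iff_ne_zero.mpr (by omega) : 1 ≤ n + 1) with h1 | h1
    · simp [← h1]
    · have hn : 1 ≤ n := by omega
      rw [Finset.sum_Icc_succ_top (by omega : 1 ≤ n + 1),
          Finset.sum_Icc_succ_top (by omega : 1 ≤ n + 1), ih hn]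
      simp only [Nat.add_sub_cancel]
      ring

open Finset in
/-- Exact conservation of the trapezoidal discrete mass for the second-order AHO
scheme on a single arc with no-flux boundary conditions `u⁺ = u⁻` at both ends
and vanishing boundary source values. Here `a j = u⁺ⁿ۪ʲ`, `b j = u⁻ⁿ۪ʲ`, and
`na, nb` are the time-`(n+1)` values. -/
theorem stmt9 (lam k h : ℝ) (hlam : 0 < lam) (hk : 0 < k) (hh : 0 < h)
    (M : ℕ) (hM : 1 ≤ M) (a b f na nb : ℕ → ℝ)
    (hbd0 : a 0 = b 0) (hbdM : a (M + 1) = b (M + 1))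
    (hf0 : f 0 = 0) (hfM : f (M + 1) = 0)
    (hnb : ∀ j ≤ M, nb j = (1 - lam * k / h - k / 4) * b j + (k * lam / h - k / 4) * b (j + 1)
        + (k / 4) * (a j + a (j + 1)) - (k / (4 * lam)) * (f (j + 1) + f j))
    (hna : ∀ j, 1 ≤ j → j ≤ M + 1 →
      na j = (1 - lam * k / h - k / 4) * a j + (k * lam / h - k / 4) * a (j - 1)
        + (k / 4) * (b j + b (j - 1)) + (k / (4 * lam)) * (f (j - 1) + f j))
    (hna0 : na 0 = nb 0) (hnbM : nb (M + 1) = na (M + 1)) :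
    h * ((na 0 + nb 0) / 2 + (∑ j ∈ Finset.Icc 1 M, (na j + nb j))
        + (na (M + 1) + nb (M + 1)) / 2)
      = h * ((a 0 + b 0) / 2 + (∑ j ∈ Finset.Icc 1 M, (a j + b j))
        + (a (M + 1) + b (M + 1)) / 2) := by
  set c : ℝ := 1 - lam * k / h - k / 4 with hc
  set d : ℝ := k * lam / h - k / 4 with hd
  set e : ℝ := k / 4 with he
  set g : ℝ := k / (4 * lam) with hg
  have key : ∀ j ∈ Finset.Icc 1 M, na j + nb j =
      (c * a j + c * b j + d * a (j - 1) + d * b (j + 1) + e * a j + e * a (j + 1)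
        + e * b j + e * b (j - 1) + g * f (j - 1)) - g * f (j + 1) := by
    intro j hj
    simp only [Finset.mem_Icc] at hj
    rw [hna j hj.1 (by omega), hnb j hj.2]
    ring
  rw [Finset.sum_congr rfl key]
  simp only [Finset.sum_sub_distrib, Finset.sum_add_distrib, ← Finset.mul_sum]
  rw [aho_shift_down a M hM, aho_shift_up b M hM, aho_shift_up a M hM,
      aho_shift_down b M hM, aho_shift_down f M hM, aho_shift_up f M hM,
      hna0, hnbM, hna (M + 1) (by omega) (by omega), hnb 0 (by omega)]
  simp only [Nat.add_sub_cancel, hf0, hfM]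
  rw [← hbd0, hbdM]
  ring
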